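/- Let p be a prime, e ≥ 1 an integer, and R a commutative ring of characteristic p such that F^e_*R (that is, R viewed as a module over itself via r • x = r^{p^e}·x) is a finitely generated free R-module and such that there exists a p^{-e}-linear map φ on R with φ(1) = 1. Let 𝔞 be a nonzero finitely generated ideal of R. Then a natural number n is a ν-invariant of level e for 𝔞 if and only if C^e·𝔞^n ≠ C^e·𝔞^{n+1}. (Proposition 4.1.) -/
import Mathlib


/-- A `p^{-e}`-linear map on `R`: an additive map `φ : R → R` with
`φ (r^{p^e} * x) = r * φ x`. -/
def IsCartierLinear (p e : ℕ) {R : Type*} [CommRing R] (φ : R →+ R) : Prop :=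
  ∀ r x : R, φ (r ^ p ^ e * x) = r * φ x

/-- `C^e · I`: the ideal generated by all `φ x` with `φ` a `p^{-e}`-linear map and `x ∈ I`. -/
def cartierIdeal (p e : ℕ) {R : Type*} [CommRing R] (I : Ideal R) : Ideal R :=
  Ideal.span {y | ∃ φ : R →+ R, IsCartierLinear p e φ ∧ ∃ x ∈ I, φ x = y}

/-- `J^{[q]}`: the ideal generated by `q`-th powers of elements of `J`. -/
def bracketPower {R : Type*} [CommRing R] (J : Ideal R) (q : ℕ) : Ideal R :=
  Ideal.span ((fun x => x ^ q) '' (J : Set R))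

/-- `n` is a ν-invariant of level `e` for `𝔞`: there is a proper ideal `J` whose radical
contains `𝔞` such that `n` is the largest natural number with `𝔞^n ⊄ J^{[p^e]}`. -/
def IsNuInvariant (p e : ℕ) {R : Type*} [CommRing R] (𝔞 : Ideal R) (n : ℕ) : Prop :=
  ∃ J : Ideal R, J ≠ ⊤ ∧ 𝔞 ≤ J.radical ∧ ¬ 𝔞 ^ n ≤ bracketPower J (p ^ e) ∧
    ∀ m : ℕ, ¬ 𝔞 ^ m ≤ bracketPower J (p ^ e) → m ≤ n

lemma cartierIdeal_mono (p e : ℕ) {R : Type*} [CommRing R] {I I' : Ideal R} (h : I ≤ I') :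
    cartierIdeal p e I ≤ cartierIdeal p e I' := by
  apply Ideal.span_mono
  rintro y ⟨φ, hφ, x, hx, rfl⟩
  exact ⟨φ, hφ, x, h hx, rfl⟩

lemma bracketPower_mono {R : Type*} [CommRing R] {J J' : Ideal R} (h : J ≤ J') (q : ℕ) :
    bracketPower J q ≤ bracketPower J' q :=
  Ideal.span_mono (Set.image_mono h)

/-- If `I ≤ J^{[q]}` then `C^e · I ≤ J`. -/
lemma cartierIdeal_le_of_le_bracketPower (p e : ℕ) {R : Type*} [CommRing R] {I J : Ideal R}
    (h : I ≤ bracketPower J (p ^ e)) : cartierIdeal p e I ≤ J := by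
  rw [cartierIdeal, Ideal.span_le]
  rintro y ⟨φ, hφ, x, hx, rfl⟩
  have hx' : x ∈ bracketPower J (p ^ e) := h hx
  rw [bracketPower] at hx'
  obtain ⟨m, f, g, hsum⟩ := Submodule.mem_span_set'.mp hx'
  have : φ x = ∑ i, φ (f i • (g i : R)) := by
    rw [← map_sum, hsum]
  rw [this]
  refine Ideal.sum_mem _ fun i _ => ?_
  obtain ⟨z, hz, hzi⟩ := (g i).2
  have : f i • (g i : R) = z ^ p ^ e * f i := by
    rw [smul_eq_mul, ← hzi, mul_comm]
  rw [this, hφ z (f i)]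
  exact Ideal.mul_mem_right _ _ (by exact_mod_cast hz)

/-- If `I ≤ J^{[q]}` and `J` is closed under splitting images... then
`I ≤ (C^e · I)^{[q]}`, using freeness of `F^e_* R`. -/
lemma le_bracketPower_cartierIdeal (p : ℕ) (hp : p.Prime) (e : ℕ)
    {R : Type*} [CommRing R] [CharP R p]
    (hfree : ∃ n : ℕ, ∃ b : Fin n → R, ∀ x : R, ∃! c : Fin n → R,
      x = ∑ i, c i ^ p ^ e * b i) (I : Ideal R) :
    I ≤ bracketPower (cartierIdeal p e I) (p ^ e) := by
  haveI : Fact p.Prime := ⟨hp⟩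
  obtain ⟨m, b, hb⟩ := hfree
  set q := p ^ e with hq
  -- coordinate functions
  have hex : ∀ x : R, x = ∑ i, (hb x).choose i ^ q * b i := fun x => (hb x).choose_spec.1
  have huniq : ∀ (x : R) (c : Fin m → R), x = ∑ i, c i ^ q * b i → c = (hb x).choose :=
    fun x c hc => (hb x).choose_spec.2 c hc
  set C : R → Fin m → R := fun x => (hb x).choose with hC
  have hadd : ∀ x y : R, C (x + y) = C x + C y := by
    intro x y
    refine (huniq (x + y) (C x + C y) ?_).symm
    have : ∀ i, (C x i + C y i) ^ q = C x i ^ q + C y i ^ q := fun i =>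
      add_pow_char_pow (C x i) (C y i) p e
    calc x + y = ∑ i, C x i ^ q * b i + ∑ i, C y i ^ q * b i := by
          rw [← hex x, ← hex y]
      _ = ∑ i, (C x i ^ q * b i + C y i ^ q * b i) := by rw [Finset.sum_add_distrib]
      _ = ∑ i, ((C x + C y) i) ^ q * b i := by
          refine Finset.sum_congr rfl fun i _ => ?_
          simp only [Pi.add_apply, this i, add_mul]
  have hlin : ∀ r x : R, C (r ^ q * x) = fun i => r * C x i := by
    intro r x
    refine (huniq (r ^ q * x) _ ?_).symm
    calc r ^ q * x = r ^ q * ∑ i, C x i ^ q * b i := by rw [← hex x]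
      _ = ∑ i, (r * C x i) ^ q * b i := by
          rw [Finset.mul_sum]
          refine Finset.sum_congr rfl fun i _ => ?_
          rw [mul_pow, mul_assoc]
  set Φ : Fin m → (R →+ R) := fun i =>
    AddMonoidHom.mk' (fun x => C x i) (fun x y => by simpa using congrFun (hadd x y) i) with hΦ
  have hΦlin : ∀ i, IsCartierLinear p e (Φ i) := by
    intro i r x
    show C (r ^ q * x) i = r * C x i
    rw [hlin r x]
  intro x hx
  have hmem : ∀ i, C x i ∈ cartierIdeal p e I := fun i =>
    Ideal.subset_span ⟨Φ i, hΦlin i, x, hx, rfl⟩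
  rw [hex x]
  refine Ideal.sum_mem _ fun i _ => ?_
  exact Ideal.mul_mem_right _ _ (Ideal.subset_span ⟨C x i, hmem i, rfl⟩)

/-- Proposition 4.1: `n` is a ν-invariant of level `e` for `𝔞` iff
`C^e · 𝔞^n ≠ C^e · 𝔞^{n+1}`. -/
theorem isNuInvariant_iff (p : ℕ) (hp : p.Prime)
    (e : ℕ) (he : 1 ≤ e) (R : Type*) [CommRing R] [CharP R p]
    (hfree : ∃ n : ℕ, ∃ b : Fin n → R, ∀ x : R, ∃! c : Fin n → R,
      x = ∑ i, c i ^ p ^ e * b i)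
    (hsplit : ∃ φ : R →+ R, IsCartierLinear p e φ ∧ φ 1 = 1)
    (𝔞 : Ideal R) (h𝔞ne : 𝔞 ≠ 0) (h𝔞fg : 𝔞.FG) (n : ℕ) :
    IsNuInvariant p e 𝔞 n ↔ cartierIdeal p e (𝔞 ^ n) ≠ cartierIdeal p e (𝔞 ^ (n + 1)) := by
  have hle : cartierIdeal p e (𝔞 ^ (n + 1)) ≤ cartierIdeal p e (𝔞 ^ n) :=
    cartierIdeal_mono p e (Ideal.pow_le_pow_right (Nat.le_succ n))
  constructor
  · rintro ⟨J, hJtop, hrad, hn, hmax⟩ heq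
    have h1 : 𝔞 ^ (n + 1) ≤ bracketPower J (p ^ e) := by
      by_contra hcon
      exact Nat.not_succ_le_self n (hmax (n + 1) hcon)
    have h2 : cartierIdeal p e (𝔞 ^ (n + 1)) ≤ J :=
      cartierIdeal_le_of_le_bracketPower p e h1
    have h3 : 𝔞 ^ n ≤ bracketPower J (p ^ e) :=
      le_trans (le_bracketPower_cartierIdeal p hp e hfree (𝔞 ^ n))
        (bracketPower_mono (heq ▸ h2) _)
    exact hn h3
  · intro hne
    obtain ⟨φ₀, hφ₀, hφ₀1⟩ := hsplit
    refine ⟨cartierIdeal p e (𝔞 ^ (n + 1)), ?_, ?_, ?_, ?_⟩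
    · intro htop
      exact hne (le_antisymm (htop ▸ le_top) hle)
    · intro a ha
      rw [Ideal.mem_radical_iff]
      refine ⟨n + 1, Ideal.subset_span ⟨φ₀, hφ₀, (a ^ (n + 1)) ^ p ^ e, ?_, ?_⟩⟩
      · have h1 : a ^ (n + 1) ∈ 𝔞 ^ (n + 1) := Ideal.pow_mem_pow ha (n + 1)
        have : (a ^ (n + 1)) ^ p ^ e = a ^ (n + 1) * (a ^ (n + 1)) ^ (p ^ e - 1) := by
          rw [← pow_succ']
          congr 1
          exact (Nat.succ_pred_eq_of_pos (pow_pos hp.pos e)).symm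
        rw [this]
        exact Ideal.mul_mem_right _ _ h1
      · have := hφ₀ (a ^ (n + 1)) 1
        rw [mul_one, hφ₀1, mul_one] at this
        exact this
    · intro hcon
      exact hne (le_antisymm (cartierIdeal_le_of_le_bracketPower p e hcon) hle)
    · intro m hm
      by_contra hcon
      push_neg at hcon
      have : 𝔞 ^ m ≤ 𝔞 ^ (n + 1) := Ideal.pow_le_pow_right hcon
      exact hm (le_trans this (le_bracketPower_cartierIdeal p hp e hfree (𝔞 ^ (n + 1))))
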